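/- The non-isotropic bounce S^{ani}_{f,c} preserves the Hamiltonian constraint: if 1 - Tr((K⁻)²) = 8π (φ₀⁻)², then with K⁺ = μ^{-3}(K⁻ - δ/3) + δ/3, φ₀⁺ = μ^{-3}φ₀⁻(1+f(φ₁⁻))^{1/2}, and μ⁶ = 1 + 12π(φ₀⁻)² f(φ₁⁻), one also has 1 - Tr((K⁺)²) = 8π (φ₀⁺)². -/

import Mathlib

open Real

/-- the non-isotropic bounce preserves the Hamiltonian constraint. -/
theorem nonisotropic_bounce_hamiltonian
    (K : Matrix (Fin 3) (Fin 3) ℝ) (φ₀ φ₁ μ : ℝ) (f : ℝ → ℝ)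
    (hf : ∀ x, 0 ≤ f x) (hμ : 0 < μ)
    (hK : K.trace = 1)
    (hham : 1 - (K * K).trace = 8 * π * φ₀ ^ 2)
    (hmu : μ ^ 6 = 1 + 12 * π * φ₀ ^ 2 * f φ₁) :
    1 - ((((μ ^ 3)⁻¹ • (K - (3 : ℝ)⁻¹ • (1 : Matrix (Fin 3) (Fin 3) ℝ))
          + (3 : ℝ)⁻¹ • (1 : Matrix (Fin 3) (Fin 3) ℝ)) *
         ((μ ^ 3)⁻¹ • (K - (3 : ℝ)⁻¹ • (1 : Matrix (Fin 3) (Fin 3) ℝ))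
          + (3 : ℝ)⁻¹ • (1 : Matrix (Fin 3) (Fin 3) ℝ))).trace)
      = 8 * π * ((μ ^ 3)⁻¹ * φ₀ * Real.sqrt (1 + f φ₁)) ^ 2 := by
  have hfa : (0:ℝ) ≤ 1 + f φ₁ := by linarith [hf φ₁]
  have hs : Real.sqrt (1 + f φ₁) ^ 2 = 1 + f φ₁ := Real.sq_sqrt hfa
  have hne : (μ ^ 3) ≠ 0 := by positivity
  have htr : ((((μ ^ 3)⁻¹ • (K - (3 : ℝ)⁻¹ • (1 : Matrix (Fin 3) (Fin 3) ℝ))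
          + (3 : ℝ)⁻¹ • (1 : Matrix (Fin 3) (Fin 3) ℝ)) *
         ((μ ^ 3)⁻¹ • (K - (3 : ℝ)⁻¹ • (1 : Matrix (Fin 3) (Fin 3) ℝ))
          + (3 : ℝ)⁻¹ • (1 : Matrix (Fin 3) (Fin 3) ℝ))).trace)
      = ((μ ^ 3)⁻¹)^2 * ((K*K).trace - 1/3) + 1/3 := by
    simp only [mul_add, add_mul, Matrix.smul_mul, Matrix.mul_smul, sub_mul, mul_sub,
      Matrix.trace_add, Matrix.trace_sub, Matrix.trace_smul, Matrix.mul_one, Matrix.one_mul,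
      Matrix.trace_one, smul_sub, smul_smul, smul_eq_mul, hK]
    simp only [Finset.card_univ, Fintype.card_fin]
    ring
  rw [htr]
  have hKK : (K*K).trace = 1 - 8*π*φ₀^2 := by linarith
  rw [hKK]
  field_simp
  linear_combination 2*hmu - (24*π*φ₀^2)*hs
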